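/- Let Ψ ∈ ℝ^{m×n} and b ∈ ℝ^m with b in the column space of Ψ. Then there exists a constant δ* > 0 (depending on Ψ and b) such that for every δ with 0 < δ < δ*, every minimizer of ‖x‖_{g_δ} over {x ∈ ℝⁿ : Ψx = b} also minimizes ‖x‖₀ over {x ∈ ℝⁿ : Ψx = b}. -/

import Mathlib

open Finset

/-- ℓ₀ "norm": number of nonzero entries. -/
noncomputable def l0norm {n : ℕ} (x : Fin n → ℝ) : ℕ :=
  (Finset.univ.filter (fun i => x i ≠ 0)).card



lemma arctan_strictConcaveOn : StrictConcaveOn ℝ (Set.Ici (0:ℝ)) Real.arctan := by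
  apply strictConcaveOn_of_deriv2_neg (convex_Ici 0) Real.continuous_arctan.continuousOn
  intro x hx
  rw [interior_Ici] at hx
  have h1 : deriv Real.arctan = fun y : ℝ => (1 + y^2)⁻¹ := by
    funext y; exact (Real.hasDerivAt_arctan' y).deriv
  have h2 : HasDerivAt (fun y : ℝ => (1 + y^2)⁻¹) (-(2*x) / (1+x^2)^2) x := by
    have hc : HasDerivAt (fun y : ℝ => 1 + y^2) (2*x) x := by
      simpa using (hasDerivAt_pow 2 x).const_add 1
    have hne : (1 + x^2 : ℝ) ≠ 0 := by positivity
    exact hc.inv hne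
  have : deriv^[2] Real.arctan x = -(2*x) / (1+x^2)^2 := by
    show deriv (deriv Real.arctan) x = _
    rw [h1]; exact h2.deriv
  rw [this]
  have : (0:ℝ) < (1+x^2)^2 := by positivity
  have hx' : (0:ℝ) < x := hx
  exact div_neg_of_neg_of_pos (by linarith) this


lemma arctan_midpoint {u w : ℝ} (hu : 0 ≤ u) (hw : 0 ≤ w) (huw : u ≠ w) :
    Real.arctan u + Real.arctan w < 2 * Real.arctan ((u + w) / 2) := by
  have := arctan_strictConcaveOn.2 hu hw huw (by norm_num : (0:ℝ) < 1/2)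
    (by norm_num : (0:ℝ) < 1/2) (by norm_num)
  simp only [smul_eq_mul] at this
  have h2 : (1/2 : ℝ) * u + (1/2) * w = (u + w) / 2 := by ring
  rw [h2] at this
  linarith

lemma term_ineq_pos {δ : ℝ} (hδ : 0 < δ) {p q : ℝ} (hq : q ≠ 0) (hp : 0 < p) (h : |q| < p) :
    Real.arctan (|p - q| / δ) + Real.arctan (|p + q| / δ) < 2 * Real.arctan (|p| / δ) := by
  have h1 : 0 < p - q := by cases abs_lt.mp h; linarith
  have h2 : 0 < p + q := by cases abs_lt.mp h; linarith
  rw [abs_of_pos h1, abs_of_pos h2, abs_of_pos hp]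
  have huw : (p - q) / δ ≠ (p + q) / δ := by
    intro hcon
    apply hq
    field_simp at hcon
    linarith
  have := arctan_midpoint (u := (p-q)/δ) (w := (p+q)/δ)
    (by positivity) (by positivity) huw
  have hmid : ((p-q)/δ + (p+q)/δ) / 2 = p / δ := by field_simp; ring
  rwa [hmid] at this

lemma term_ineq {δ : ℝ} (hδ : 0 < δ) {p q : ℝ} (hq : q ≠ 0) (h : |q| < |p|) :
    Real.arctan (|p - q| / δ) + Real.arctan (|p + q| / δ) < 2 * Real.arctan (|p| / δ) := by
  rcases lt_trichotomy p 0 with hp | hp | hp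
  · have := term_ineq_pos hδ (p := -p) (q := -q) (hq := neg_ne_zero.mpr hq)
      (hp := by linarith) (h := by rw [abs_neg]; rwa [abs_of_neg hp] at h)
    have e1 : |-p - -q| = |p - q| := by rw [← abs_neg]; ring_nf
    have e2 : |-p + -q| = |p + q| := by rw [← abs_neg]; ring_nf
    have e3 : |-p| = |p| := abs_neg p
    rwa [e1, e2, e3] at this
  · simp [hp] at h; exact absurd h (abs_nonneg q).not_gt
  · exact term_ineq_pos hδ hq hp (by rwa [abs_of_pos hp] at h)


/-- A minimizer of the arctan penalty is the unique feasible point supported in its support. -/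
lemma keyA {m n : ℕ} (Ψ : Matrix (Fin m) (Fin n) ℝ) (b : Fin m → ℝ) {δ : ℝ} (hδ : 0 < δ)
    (xs : Fin n → ℝ) (hxs : Ψ.mulVec xs = b)
    (hmin : ∀ y : Fin n → ℝ, Ψ.mulVec y = b →
      ∑ i, Real.arctan (|xs i| / δ) ≤ ∑ i, Real.arctan (|y i| / δ))
    (y : Fin n → ℝ) (hy : Ψ.mulVec y = b) (hsupp : ∀ i, xs i = 0 → y i = 0) :
    y = xs := by
  by_contra hne
  set d : Fin n → ℝ := y - xs with hd
  have hdkern : Ψ.mulVec d = 0 := by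
    rw [hd, Matrix.mulVec_sub, hy, hxs, sub_self]
  set T : Finset (Fin n) := Finset.univ.filter (fun i => d i ≠ 0) with hT
  have hTne : T.Nonempty := by
    by_contra hTe
    apply hne
    funext i
    have : i ∉ T := fun hi => hTe ⟨i, hi⟩
    have : d i = 0 := by simpa [hT] using this
    have : y i - xs i = 0 := this
    linarith
  have hxsne : ∀ i ∈ T, xs i ≠ 0 := by
    intro i hi hxi
    have hdi : d i ≠ 0 := by simpa [hT] using hi
    exact hdi (by simp [hd, hxi, hsupp i hxi])
  set β : ℝ := (T.inf' hTne fun i => |xs i| / |d i|) / 2 with hβ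
  have hβpos : 0 < β := by
    rw [hβ]
    have : 0 < T.inf' hTne fun i => |xs i| / |d i| := by
      rw [Finset.lt_inf'_iff]
      intro i hi
      have hdi : d i ≠ 0 := by simpa [hT] using hi
      exact div_pos (abs_pos.mpr (hxsne i hi)) (abs_pos.mpr hdi)
    linarith
  have hsmall : ∀ i ∈ T, |β * d i| < |xs i| := by
    intro i hi
    have hdi : d i ≠ 0 := by simpa [hT] using hi
    have h1 : (T.inf' hTne fun i => |xs i| / |d i|) ≤ |xs i| / |d i| :=
      Finset.inf'_le _ hi
    have h2 : 0 < |d i| := abs_pos.mpr hdi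
    have h3 : 0 < |xs i| := abs_pos.mpr (hxsne i hi)
    rw [abs_mul, abs_of_pos hβpos]
    rw [hβ]
    have h4 := (le_div_iff₀ h2).mp h1
    linarith
  -- feasibility of xs ± β • d
  have hfeas : ∀ t : ℝ, Ψ.mulVec (xs + t • d) = b := by
    intro t
    rw [Matrix.mulVec_add, Matrix.mulVec_smul, hdkern, hxs]
    simp
  have hplus := hmin _ (hfeas β)
  have hminus := hmin _ (hfeas (-β))
  have happ : ∀ t : ℝ, ∀ i, (xs + t • d) i = xs i + t * d i := fun t i => rfl
  have hsumlt :
      (∑ i, Real.arctan (|xs i + (-β) * d i| / δ)) + ∑ i, Real.arctan (|xs i + β * d i| / δ) <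
        2 * ∑ i, Real.arctan (|xs i| / δ) := by
    rw [← Finset.sum_add_distrib, Finset.mul_sum]
    apply Finset.sum_lt_sum
    · intro i _
      by_cases hdi : d i = 0
      · simp [hdi]; ring_nf; exact le_refl _
      · have hi : i ∈ T := by simp [hT, hdi]
        have hq : β * d i ≠ 0 := mul_ne_zero hβpos.ne' hdi
        have := term_ineq hδ hq (hsmall i hi)
        have e : xs i + -β * d i = xs i - β * d i := by ring
        rw [e]
        exact this.le
    · obtain ⟨i, hi⟩ := hTne
      refine ⟨i, Finset.mem_univ i, ?_⟩
      have hdi : d i ≠ 0 := by simpa [hT] using hi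
      have hq : β * d i ≠ 0 := mul_ne_zero hβpos.ne' hdi
      have := term_ineq hδ hq (hsmall i hi)
      have e : xs i + -β * d i = xs i - β * d i := by ring
      rw [e]
      exact this
  simp only [Pi.add_apply, Pi.smul_apply, smul_eq_mul] at hplus hminus
  linarith



lemma arctan_nonneg' {x : ℝ} (hx : 0 ≤ x) : 0 ≤ Real.arctan x := by
  rw [← Real.arctan_zero]
  exact Real.arctan_strictMono.monotone hx


/-- For b in the column space of Ψ, there is δ* > 0 such that for all
0 < δ < δ*, every minimizer of the atan-sum penalty ‖x‖_{g_δ} over {x : Ψx = b} also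
minimizes ‖x‖₀ over {x : Ψx = b}. -/
theorem stmt6 {m n : ℕ} (Ψ : Matrix (Fin m) (Fin n) ℝ) (b : Fin m → ℝ)
    (hb : ∃ x : Fin n → ℝ, Ψ.mulVec x = b) :
    ∃ δs : ℝ, 0 < δs ∧ ∀ δ : ℝ, 0 < δ → δ < δs →
      ∀ xs : Fin n → ℝ, Ψ.mulVec xs = b →
        (∀ y : Fin n → ℝ, Ψ.mulVec y = b →
          ∑ i, Real.arctan (|xs i| / δ) ≤ ∑ i, Real.arctan (|y i| / δ)) →
        ∀ y : Fin n → ℝ, Ψ.mulVec y = b → l0norm xs ≤ l0norm y := by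
  classical
  have hex : ∃ k : ℕ, ∃ x : Fin n → ℝ, Ψ.mulVec x = b ∧ l0norm x = k :=
    ⟨l0norm hb.choose, hb.choose, hb.choose_spec, rfl⟩
  obtain ⟨k, ⟨xstar, hxstar, hkstar⟩, hkmin⟩ :
      ∃ k : ℕ, (∃ x, Ψ.mulVec x = b ∧ l0norm x = k) ∧
        ∀ y, Ψ.mulVec y = b → k ≤ l0norm y :=
    ⟨Nat.find hex, Nat.find_spec hex, fun y hy => Nat.find_min' hex ⟨y, hy, rfl⟩⟩
  -- choose a representative feasible point for each candidate support
  have hv0 : ∀ S : Finset (Fin n), ∃ z : Fin n → ℝ,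
      (∃ x, Ψ.mulVec x = b ∧ ∀ i ∉ S, x i = 0) → (Ψ.mulVec z = b ∧ ∀ i ∉ S, z i = 0) := by
    intro S
    by_cases h : ∃ x, Ψ.mulVec x = b ∧ ∀ i ∉ S, x i = 0
    · exact ⟨h.choose, fun _ => h.choose_spec⟩
    · exact ⟨0, fun hh => absurd hh h⟩
  choose v hv using hv0
  obtain ⟨c, hcpos, hclb⟩ :
      ∃ c : ℝ, 0 < c ∧ ∀ S i, v S i ≠ 0 → c ≤ |v S i| := by
    set P : Finset ℝ := (Finset.image (fun pr : Finset (Fin n) × Fin n => |v pr.1 pr.2|)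
      Finset.univ).filter (fun r => 0 < r) with hP
    by_cases hPne : P.Nonempty
    · refine ⟨P.min' hPne, (Finset.mem_filter.mp (P.min'_mem hPne)).2, ?_⟩
      intro Sx i hvi
      apply Finset.min'_le
      rw [hP]
      refine Finset.mem_filter.mpr ⟨?_, abs_pos.mpr hvi⟩
      exact Finset.mem_image.mpr ⟨(Sx, i), Finset.mem_univ _, rfl⟩
    · refine ⟨1, one_pos, ?_⟩
      intro Sx i hvi
      exfalso
      apply hPne
      refine ⟨|v Sx i|, Finset.mem_filter.mpr ⟨?_, abs_pos.mpr hvi⟩⟩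
      exact Finset.mem_image.mpr ⟨(Sx, i), Finset.mem_univ _, rfl⟩
  set θ : ℝ := k * Real.pi / (2 * (k + 1)) with hθ
  have hθ0 : 0 ≤ θ := by positivity
  have hθlt : θ < Real.pi / 2 := by
    rw [hθ, div_lt_div_iff₀ (by positivity) (by norm_num)]
    nlinarith [Real.pi_pos]
  have htannn : 0 ≤ Real.tan θ := Real.tan_nonneg_of_nonneg_of_le_pi_div_two hθ0 hθlt.le
  refine ⟨c / (Real.tan θ + 1), by positivity, ?_⟩
  intro δ hδ hδs xs hxs hmin y hy
  refine le_trans ?_ (hkmin y hy)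
  by_contra hcon
  push_neg at hcon
  set S : Finset (Fin n) := Finset.univ.filter (fun i => xs i ≠ 0) with hS
  have hexS : ∃ x, Ψ.mulVec x = b ∧ ∀ i ∉ S, x i = 0 :=
    ⟨xs, hxs, fun i hi => by
      by_contra h
      exact hi (by simp [hS, h])⟩
  obtain ⟨hvfeas, hvsupp⟩ := hv S hexS
  have hveq : v S = xs :=
    keyA Ψ b hδ xs hxs hmin (v S) hvfeas (fun i h0 => hvsupp i (by simp [hS, h0]))
  have hxslb : ∀ i, xs i ≠ 0 → c ≤ |xs i| := by
    intro i hi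
    rw [← hveq] at hi ⊢
    exact hclb S i hi
  have htan : Real.tan θ < c / δ := by
    rw [lt_div_iff₀ hδ]
    have h1 : δ * (Real.tan θ + 1) < c := by
      have := (lt_div_iff₀ (by positivity : (0:ℝ) < Real.tan θ + 1)).mp hδs
      nlinarith
    nlinarith
  have harct : θ < Real.arctan (c / δ) := by
    calc θ = Real.arctan (Real.tan θ) :=
          (Real.arctan_tan (by linarith [Real.pi_pos]) hθlt).symm
      _ < _ := Real.arctan_strictMono htan
  have harctnn : 0 ≤ Real.arctan (c / δ) := arctan_nonneg' (by positivity)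
  have hlow : (l0norm xs : ℝ) * Real.arctan (c / δ) ≤ ∑ i, Real.arctan (|xs i| / δ) := by
    have h1 : ∑ _i ∈ S, Real.arctan (c / δ) ≤ ∑ i ∈ S, Real.arctan (|xs i| / δ) := by
      apply Finset.sum_le_sum
      intro i hi
      have hi' : xs i ≠ 0 := by simpa [hS] using hi
      exact Real.arctan_strictMono.monotone (by gcongr; exact hxslb i hi')
    have h2 : ∑ i ∈ S, Real.arctan (|xs i| / δ) ≤ ∑ i, Real.arctan (|xs i| / δ) := by
      apply Finset.sum_le_sum_of_subset_of_nonneg (Finset.subset_univ S)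
      intro i _ _
      exact arctan_nonneg' (by positivity)
    have h3 : ∑ _i ∈ S, Real.arctan (c / δ) = (l0norm xs : ℝ) * Real.arctan (c / δ) := by
      rw [Finset.sum_const, nsmul_eq_mul, l0norm]
    linarith
  have hupp : ∑ i, Real.arctan (|xstar i| / δ) ≤ (k : ℝ) * (Real.pi / 2) := by
    have h0 : ∑ i, Real.arctan (|xstar i| / δ)
        = ∑ i ∈ Finset.univ.filter (fun i => xstar i ≠ 0), Real.arctan (|xstar i| / δ) := by
      symm
      apply Finset.sum_subset (Finset.subset_univ _)
      intro i _ hi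
      have : xstar i = 0 := by simpa using hi
      simp [this]
    rw [h0]
    calc ∑ i ∈ Finset.univ.filter (fun i => xstar i ≠ 0), Real.arctan (|xstar i| / δ)
        ≤ ∑ _i ∈ Finset.univ.filter (fun i => xstar i ≠ 0), Real.pi / 2 :=
          Finset.sum_le_sum (fun i _ => (Real.arctan_lt_pi_div_two _).le)
      _ = (k : ℝ) * (Real.pi / 2) := by
          rw [Finset.sum_const, nsmul_eq_mul]
          congr 1
          rw [show (Finset.univ.filter (fun i => xstar i ≠ 0)).card = l0norm xstar from rfl, hkstar]
  have hchain : (l0norm xs : ℝ) * Real.arctan (c / δ) ≤ (k : ℝ) * (Real.pi / 2) :=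
    hlow.trans ((hmin xstar hxstar).trans hupp)
  have hK : (k : ℝ) + 1 ≤ (l0norm xs : ℝ) := by exact_mod_cast hcon
  have hkey : ((k : ℝ) + 1) * θ = (k : ℝ) * (Real.pi / 2) := by
    rw [hθ]
    field_simp
  have h5 : ((k : ℝ) + 1) * θ < ((k : ℝ) + 1) * Real.arctan (c / δ) := by
    apply mul_lt_mul_of_pos_left harct (by positivity)
  have h6 : ((k : ℝ) + 1) * Real.arctan (c / δ) ≤ (l0norm xs : ℝ) * Real.arctan (c / δ) :=
    mul_le_mul_of_nonneg_right hK harctnn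
  linarith
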